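/- Let G be an abelian group and A, B ⊆ G finite nonempty sets with |A| ≥ |B|. Let X, Y be independent random variables uniform on A and B respectively, and suppose H(X + Y) ≤ (1 + ε)·log₂|A| for some ε > 0. Then for every c > 1 there exists a set F ⊆ A × B such that |F| ≥ |A|·|B|·(c−1)/c and |A +_F B| ≤ |A|^{1+cε} = (|A|^{1/2+cε}·|B|^{−1/2})·|A|^{1/2}·|B|^{1/2}. -/

import Mathlib

open Pointwise

namespace GIFC

variable {G : Type*} [AddCommGroup G] [DecidableEq G]

/-- `T(s) = {(a,b) ∈ A × B : a + b = s}`: the number of representations of `s`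
as a sum of an element of `A` and an element of `B`. -/
def repCount (A B : Finset G) (s : G) : ℕ :=
  ((A ×ˢ B).filter fun ab => ab.1 + ab.2 = s).card

/-- The Shannon entropy (in bits) of `X + Y` where `X, Y` are independent and
uniform on `A` and `B` respectively:
`H(X+Y) = -∑_{s ∈ A+B} (|T(s)|/(|A||B|)) log₂(|T(s)|/(|A||B|))`. -/
noncomputable def entropySum (A B : Finset G) : ℝ :=
  -∑ s ∈ A + B,
      ((repCount A B s : ℝ) / ((A.card : ℝ) * B.card)) *
        Real.logb 2 ((repCount A B s : ℝ) / ((A.card : ℝ) * B.card))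

lemma sum_repCount (A B : Finset G) :
    ∑ s ∈ A + B, repCount A B s = A.card * B.card := by
  rw [← Finset.card_product]
  exact (Finset.card_eq_sum_card_fiberwise (fun ab hab => by
    rw [Finset.mem_coe, Finset.mem_product] at hab
    exact Finset.add_mem_add hab.1 hab.2)).symm

lemma repCount_le (A B : Finset G) (s : G) : repCount A B s ≤ B.card := by
  apply Finset.card_le_card_of_injOn (fun ab => ab.2)
  · intro ab hab
    simp only [Finset.mem_coe, Finset.mem_filter, Finset.mem_product] at hab
    exact hab.1.2
  · intro ab ha ab' ha' h
    simp only [Finset.mem_coe, Finset.mem_filter] at ha ha'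
    have h1 : ab.1 = ab'.1 := by
      have := ha.2.trans ha'.2.symm
      simpa [h] using this
    exact Prod.ext h1 h

lemma one_le_repCount {A B : Finset G} {s : G} (hs : s ∈ A + B) :
    1 ≤ repCount A B s := by
  rw [Finset.mem_add] at hs
  obtain ⟨a, ha, b, hb, hab⟩ := hs
  have : (a, b) ∈ (A ×ˢ B).filter fun ab => ab.1 + ab.2 = s := by
    simp [Finset.mem_filter, Finset.mem_product, ha, hb, hab]
  exact Finset.card_pos.mpr ⟨_, this⟩

/-- Lemma 6 of the paper: if `X, Y` are independent uniform on `A, B` with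
`|A| ≥ |B|` and `H(X+Y) ≤ (1+ε) log₂ |A|`, then for every `c > 1` there is a
`F ⊆ A × B` with `|F| ≥ |A||B|(c-1)/c` whose partial sum set
`A +_F B = {a + b : (a,b) ∈ F}` has at most `|A|^{1+cε}` elements. -/
theorem exists_large_partial_sumset (A B : Finset G)
    (hA : A.Nonempty) (hB : B.Nonempty) (hBA : B.card ≤ A.card)
    (ε : ℝ) (hε : 0 < ε)
    (hH : entropySum A B ≤ (1 + ε) * Real.logb 2 (A.card : ℝ))
    (c : ℝ) (hc : 1 < c) :
    ∃ F ⊆ A ×ˢ B,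
      (A.card : ℝ) * (B.card : ℝ) * ((c - 1) / c) ≤ (F.card : ℝ) ∧
      (((F.image fun ab => ab.1 + ab.2).card : ℝ) ≤
        (A.card : ℝ) ^ (1 + c * ε)) := by
  have hc0 : (0:ℝ) < c := lt_trans one_pos hc
  have hnA : (0:ℝ) < A.card := by exact_mod_cast hA.card_pos
  have hnB : (0:ℝ) < B.card := by exact_mod_cast hB.card_pos
  by_cases hA1 : A.card = 1
  · -- trivial case |A| = 1, hence |B| = 1
    have hB1 : B.card = 1 := le_antisymm (hA1 ▸ hBA) hB.card_pos
    refine ⟨A ×ˢ B, Finset.Subset.refl _, ?_, ?_⟩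
    · rw [Finset.card_product, hA1, hB1]
      have : (c - 1) / c ≤ 1 := by
        rw [div_le_one hc0]; linarith
      push_cast
      nlinarith
    · have h1 : ((A ×ˢ B).image fun ab => ab.1 + ab.2).card ≤ 1 := by
        calc ((A ×ˢ B).image fun ab => ab.1 + ab.2).card
            ≤ (A ×ˢ B).card := Finset.card_image_le
          _ = 1 := by rw [Finset.card_product, hA1, hB1]
      rw [hA1]
      push_cast
      rw [Real.one_rpow]
      exact_mod_cast h1
  -- main case : |A| ≥ 2
  have hA2 : 2 ≤ A.card := by have := hA.card_pos; omega
  have h1A : (1:ℝ) < A.card := by exact_mod_cast lt_of_lt_of_le one_lt_two (by exact_mod_cast hA2)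
  set nA : ℝ := (A.card : ℝ) with hnAdef
  set nB : ℝ := (B.card : ℝ) with hnBdef
  set N : ℝ := nA * nB with hNdef
  have hN : 0 < N := mul_pos hnA hnB
  set θ : ℝ := nA ^ (-(1 + c * ε)) with hθdef
  have hθpos : 0 < θ := Real.rpow_pos_of_pos hnA _
  set p : G → ℝ := fun s => (repCount A B s : ℝ) / N with hpdef
  have hsumrep : ∑ s ∈ A + B, (repCount A B s : ℝ) = N := by
    rw [hNdef, hnAdef, hnBdef]
    exact_mod_cast congrArg (Nat.cast : ℕ → ℝ) (sum_repCount A B)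
  have hsum1 : ∑ s ∈ A + B, p s = 1 := by
    rw [hpdef]
    simp only
    rw [← Finset.sum_div, hsumrep, div_self hN.ne']
  have hppos : ∀ s ∈ A + B, 0 < p s := fun s hs => by
    have := one_le_repCount hs
    have : (1:ℝ) ≤ (repCount A B s : ℝ) := by exact_mod_cast this
    exact div_pos (by linarith) hN
  have hple : ∀ s, nA * p s ≤ 1 := fun s => by
    have h1 : (repCount A B s : ℝ) ≤ nB := by rw [hnBdef]; exact_mod_cast repCount_le A B s
    rw [hpdef]
    simp only
    have heq : nA * ((repCount A B s : ℝ) / N) = (repCount A B s : ℝ) / nB := by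
      rw [hNdef]; field_simp
    rw [heq, div_le_one hnB]
    exact h1
  set logA : ℝ := Real.logb 2 nA with hlogAdef
  have hlogApos : 0 < logA := Real.logb_pos one_lt_two h1A
  have hZnonneg : ∀ s ∈ A + B, 0 ≤ Real.logb 2 (1 / (nA * p s)) := fun s hs =>
    Real.logb_nonneg one_lt_two (one_le_one_div (mul_pos hnA (hppos s hs)) (hple s))
  have hent : entropySum A B = -∑ s ∈ A + B, p s * Real.logb 2 (p s) := rfl
  have hkey : ∑ s ∈ A + B, p s * Real.logb 2 (1 / (nA * p s))
      = entropySum A B - logA := by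
    have hterm : ∀ s ∈ A + B, p s * Real.logb 2 (1 / (nA * p s))
        = -(p s * Real.logb 2 (p s)) - logA * p s := by
      intro s hs
      have hp := hppos s hs
      rw [one_div, Real.logb_inv, Real.logb_mul hnA.ne' hp.ne', hlogAdef]
      ring
    rw [Finset.sum_congr rfl hterm, Finset.sum_sub_distrib, Finset.sum_neg_distrib,
      ← Finset.mul_sum, hsum1, hent]
    ring
  set L : Finset G := (A + B).filter (fun s => (repCount A B s : ℝ) < θ * N) with hLdef
  have hLsub : L ⊆ A + B := Finset.filter_subset _ _
  have hlightZ : ∀ s ∈ L, c * ε * logA ≤ Real.logb 2 (1 / (nA * p s)) := by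
    intro s hs
    rw [hLdef, Finset.mem_filter] at hs
    have hp := hppos s hs.1
    have hps : p s < θ := by
      rw [hpdef]; simp only; rw [div_lt_iff₀ hN]; exact hs.2
    have h2 : nA * p s < nA ^ (-(c * ε)) := by
      calc nA * p s < nA * θ := mul_lt_mul_of_pos_left hps hnA
        _ = nA ^ (-(c * ε)) := by
          rw [hθdef]
          nth_rewrite 1 [← Real.rpow_one nA]
          rw [← Real.rpow_add hnA]
          congr 1
          ring
    have h3 : nA ^ (c * ε) ≤ 1 / (nA * p s) := by
      rw [le_div_iff₀ (mul_pos hnA hp)]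
      calc nA ^ (c * ε) * (nA * p s) ≤ nA ^ (c * ε) * nA ^ (-(c * ε)) := by
            apply mul_le_mul_of_nonneg_left h2.le (Real.rpow_nonneg hnA.le _)
        _ = 1 := by rw [← Real.rpow_add hnA]; simp
    have h4 : Real.logb 2 (nA ^ (c * ε)) = c * ε * logA := by
      rw [Real.logb, Real.log_rpow hnA, hlogAdef, Real.logb]
      ring
    rw [← h4]
    exact Real.logb_le_logb_of_le one_lt_two (Real.rpow_pos_of_pos hnA _) h3
  have hHH : entropySum A B - logA ≤ ε * logA := by
    have : entropySum A B ≤ (1 + ε) * logA := hH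
    nlinarith
  have hMarkov : (∑ s ∈ L, p s) * (c * ε * logA) ≤ ε * logA := by
    calc (∑ s ∈ L, p s) * (c * ε * logA) = ∑ s ∈ L, p s * (c * ε * logA) := by
          rw [Finset.sum_mul]
      _ ≤ ∑ s ∈ L, p s * Real.logb 2 (1 / (nA * p s)) :=
          Finset.sum_le_sum (fun s hs =>
            mul_le_mul_of_nonneg_left (hlightZ s hs) (hppos s (hLsub hs)).le)
      _ ≤ ∑ s ∈ A + B, p s * Real.logb 2 (1 / (nA * p s)) :=
          Finset.sum_le_sum_of_subset_of_nonneg hLsub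
            (fun s hs _ => mul_nonneg (hppos s hs).le (hZnonneg s hs))
      _ = entropySum A B - logA := hkey
      _ ≤ ε * logA := hHH
  have hLmass : ∑ s ∈ L, p s ≤ 1 / c := by
    have hel : 0 < ε * logA := mul_pos hε hlogApos
    rw [le_div_iff₀ hc0]
    nlinarith [hMarkov]
  set F : Finset (G × G) :=
    (A ×ˢ B).filter (fun ab => θ * N ≤ (repCount A B (ab.1 + ab.2) : ℝ)) with hFdef
  have hFsub : F ⊆ A ×ˢ B := Finset.filter_subset _ _
  set F' : Finset (G × G) :=
    (A ×ˢ B).filter (fun ab => ¬ (θ * N ≤ (repCount A B (ab.1 + ab.2) : ℝ))) with hF'def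
  have hcards : F.card + F'.card = A.card * B.card := by
    rw [hFdef, hF'def, Finset.card_filter_add_card_filter_not, Finset.card_product]
  have hF'card : F'.card = ∑ s ∈ L, repCount A B s := by
    rw [hF'def,
      Finset.card_eq_sum_card_fiberwise (f := fun ab => ab.1 + ab.2) (t := L)
        (fun ab hab => by
          rw [Finset.mem_coe, Finset.mem_filter] at hab
          obtain ⟨h1, h2⟩ := hab
          rw [Finset.mem_product] at h1
          rw [hLdef, Finset.mem_coe, Finset.mem_filter]
          exact ⟨Finset.add_mem_add h1.1 h1.2, not_le.mp h2⟩)]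
    apply Finset.sum_congr rfl
    intro s hs
    rw [hLdef, Finset.mem_filter] at hs
    unfold repCount
    rw [Finset.filter_filter]
    congr 1
    apply Finset.filter_congr
    intro ab _
    simp only [and_iff_right_iff_imp]
    intro heq
    rw [heq]
    exact not_le.mpr hs.2
  have hF'le : (F'.card : ℝ) ≤ N / c := by
    have h5 : (F'.card : ℝ) = ∑ s ∈ L, (repCount A B s : ℝ) := by
      rw [hF'card, Nat.cast_sum]
    have h6 : ∑ s ∈ L, (repCount A B s : ℝ) = N * ∑ s ∈ L, p s := by
      rw [Finset.mul_sum]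
      apply Finset.sum_congr rfl
      intro s _
      show (repCount A B s : ℝ) = N * ((repCount A B s : ℝ) / N)
      rw [mul_comm, div_mul_cancel₀ _ hN.ne']
    rw [h5, h6]
    calc N * ∑ s ∈ L, p s ≤ N * (1 / c) :=
          mul_le_mul_of_nonneg_left hLmass hN.le
      _ = N / c := by ring
  have hFN : (F.card : ℝ) + (F'.card : ℝ) = N := by
    rw [hNdef, hnAdef, hnBdef]
    exact_mod_cast congrArg (Nat.cast : ℕ → ℝ) hcards
  have hFcard : N * ((c - 1) / c) ≤ (F.card : ℝ) := by
    have heq2 : N * ((c - 1) / c) = N - N / c := by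
      field_simp
    rw [heq2]
    linarith
  set S : Finset G := (A + B).filter (fun s => θ * N ≤ (repCount A B s : ℝ)) with hSdef
  have himg : F.image (fun ab => ab.1 + ab.2) ⊆ S := by
    intro s hs
    rw [Finset.mem_image] at hs
    obtain ⟨ab, hab, rfl⟩ := hs
    rw [hFdef, Finset.mem_filter] at hab
    obtain ⟨h1, h2⟩ := hab
    rw [Finset.mem_product] at h1
    rw [hSdef, Finset.mem_filter]
    exact ⟨Finset.add_mem_add h1.1 h1.2, h2⟩
  have hScard : (S.card : ℝ) * (θ * N) ≤ N := by
    calc (S.card : ℝ) * (θ * N) = ∑ _s ∈ S, θ * N := by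
          rw [Finset.sum_const, nsmul_eq_mul]
      _ ≤ ∑ s ∈ S, (repCount A B s : ℝ) :=
          Finset.sum_le_sum (fun s hs => (Finset.mem_filter.mp hs).2)
      _ ≤ ∑ s ∈ A + B, (repCount A B s : ℝ) :=
          Finset.sum_le_sum_of_subset_of_nonneg (Finset.filter_subset _ _)
            (fun s _ _ => by positivity)
      _ = N := hsumrep
  have hSle : (S.card : ℝ) ≤ nA ^ (1 + c * ε) := by
    have hinv : θ⁻¹ = nA ^ (1 + c * ε) := by
      rw [hθdef, Real.rpow_neg hnA.le, inv_inv]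
    have h7 : (S.card : ℝ) * θ ≤ 1 := by nlinarith [hScard, hN]
    have h8 : (S.card : ℝ) ≤ 1 / θ := (le_div_iff₀ hθpos).mpr h7
    rw [one_div, hinv] at h8
    exact h8
  refine ⟨F, hFsub, hFcard, ?_⟩
  calc ((F.image fun ab => ab.1 + ab.2).card : ℝ) ≤ (S.card : ℝ) := by
        exact_mod_cast Finset.card_le_card himg
    _ ≤ nA ^ (1 + c * ε) := hSle



end GIFC
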